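/- Let C be an elastic tensor and let l = (l₁,l₂,l₃) ∈ ℝ³ be a unit vector with l₁² < 1. Define m₀, n₀, n_φ as above, and set S₂(l) = (1/(2π)) ∫₀^{2π} T(n_φ)⁻¹ dφ. Then S₂(l) is a symmetric positive definite 3×3 real matrix; in particular S₂(l) is invertible. -/

import Mathlib

/-- The acoustic-type matrix `T(n)_{ik} = ∑_{j,l} C i j k l * n j * n l`. -/
noncomputable def acousticT (C : Fin 3 → Fin 3 → Fin 3 → Fin 3 → ℝ)
    (n : EuclideanSpace ℝ (Fin 3)) : Matrix (Fin 3) (Fin 3) ℝ :=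
  Matrix.of fun i k => ∑ j, ∑ l, C i j k l * n j * n l

/-- `m₀ = (1-l₁²)^{-1/2} (1-l₁², -l₁l₂, -l₁l₃)`. -/
noncomputable def mZero (l : EuclideanSpace ℝ (Fin 3)) : EuclideanSpace ℝ (Fin 3) :=
  (Real.sqrt (1 - (l 0) ^ 2))⁻¹ •
    (WithLp.equiv 2 (Fin 3 → ℝ)).symm ![1 - (l 0) ^ 2, -(l 0) * (l 1), -(l 0) * (l 2)]

/-- `n₀ = (1-l₁²)^{-1/2} (0, l₃, -l₂)`. -/
noncomputable def nZero (l : EuclideanSpace ℝ (Fin 3)) : EuclideanSpace ℝ (Fin 3) :=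
  (Real.sqrt (1 - (l 0) ^ 2))⁻¹ • (WithLp.equiv 2 (Fin 3 → ℝ)).symm ![0, l 2, -(l 1)]

/-- `n_φ = -m₀ sin φ + n₀ cos φ`. -/
noncomputable def nPhi (l : EuclideanSpace ℝ (Fin 3)) (φ : ℝ) : EuclideanSpace ℝ (Fin 3) :=
  (-Real.sin φ) • mZero l + Real.cos φ • nZero l

/-- `S₂(l) = (1/(2π)) ∫₀^{2π} T(n_φ)⁻¹ dφ` (entrywise integral). -/
noncomputable def STwo (C : Fin 3 → Fin 3 → Fin 3 → Fin 3 → ℝ)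
    (l : EuclideanSpace ℝ (Fin 3)) : Matrix (Fin 3) (Fin 3) ℝ :=
  Matrix.of fun i k =>
    (2 * Real.pi)⁻¹ * ∫ φ in (0:ℝ)..(2 * Real.pi), (acousticT C (nPhi l φ))⁻¹ i k

open Matrix

section ElasticAux
variable {C : Fin 3 → Fin 3 → Fin 3 → Fin 3 → ℝ}

lemma quad_eq (x : Fin 3 → ℝ) (n : EuclideanSpace ℝ (Fin 3)) :
    x ⬝ᵥ ((acousticT C n) *ᵥ x) =
      ∑ i, ∑ j, ∑ k, ∑ l, C i j k l * x i * n j * x k * n l := by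
  simp only [dotProduct, Matrix.mulVec, dotProduct, acousticT, Matrix.of_apply,
    Finset.mul_sum, Finset.sum_mul]
  refine Finset.sum_congr rfl fun i _ => ?_
  rw [Finset.sum_comm]
  refine Finset.sum_congr rfl fun j _ => ?_
  refine Finset.sum_congr rfl fun k _ => Finset.sum_congr rfl fun l _ => ?_
  ring

lemma acousticT_isHermitian (hsym1 : ∀ i j k l, C i j k l = C i j l k)
    (hsym2 : ∀ i j k l, C i j k l = C k l i j) (n : EuclideanSpace ℝ (Fin 3)) :
    (acousticT C n).IsHermitian := by
  ext i k
  simp only [conjTranspose_apply, acousticT, Matrix.of_apply, star_trivial]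
  rw [Finset.sum_comm]
  refine Finset.sum_congr rfl fun j _ => Finset.sum_congr rfl fun m _ => ?_
  rw [← hsym2 i j k m]
  ring


lemma symA (hsym1 : ∀ i j k l, C i j k l = C i j l k)
    (hsym2 : ∀ i j k l, C i j k l = C k l i j) :
    ∀ i j k l, C i j k l = C j i k l := by
  intro i j k l
  rw [hsym2, hsym1, ← hsym2]

lemma sym_quad (hsym1 : ∀ i j k l, C i j k l = C i j l k)
    (hA : ∀ i j k l, C i j k l = C j i k l) (x n : Fin 3 → ℝ) :
    ∑ i, ∑ j, ∑ k, ∑ l, C i j k l * ((x i * n j + x j * n i)/2) * ((x k * n l + x l * n k)/2)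
      = ∑ i, ∑ j, ∑ k, ∑ l, C i j k l * x i * n j * x k * n l := by
  -- expand pointwise
  have expand : ∀ i j k l : Fin 3,
      C i j k l * ((x i * n j + x j * n i)/2) * ((x k * n l + x l * n k)/2)
      = (C i j k l * x i * n j * x k * n l + C i j k l * x i * n j * x l * n k
        + C i j k l * x j * n i * x k * n l + C i j k l * x j * n i * x l * n k) / 4 := by
    intro i j k l; ring
  simp only [expand]
  have h2 : (∑ i, ∑ j, ∑ k, ∑ l, C i j k l * x i * n j * x l * n k)
      = ∑ i, ∑ j, ∑ k, ∑ l, C i j k l * x i * n j * x k * n l := by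
    refine Finset.sum_congr rfl fun i _ => Finset.sum_congr rfl fun j _ => ?_
    rw [Finset.sum_comm]
    exact Finset.sum_congr rfl fun k _ => Finset.sum_congr rfl fun l _ => by
      rw [hsym1 i j k l]
  have h3 : (∑ i, ∑ j, ∑ k, ∑ l, C i j k l * x j * n i * x k * n l)
      = ∑ i, ∑ j, ∑ k, ∑ l, C i j k l * x i * n j * x k * n l := by
    rw [Finset.sum_comm]
    refine Finset.sum_congr rfl fun i _ => Finset.sum_congr rfl fun j _ =>
      Finset.sum_congr rfl fun k _ => Finset.sum_congr rfl fun l _ => ?_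
    rw [hA j i k l]
  have h4 : (∑ i, ∑ j, ∑ k, ∑ l, C i j k l * x j * n i * x l * n k)
      = ∑ i, ∑ j, ∑ k, ∑ l, C i j k l * x i * n j * x k * n l := by
    rw [Finset.sum_comm]
    refine Finset.sum_congr rfl fun i _ => Finset.sum_congr rfl fun j _ => ?_
    rw [Finset.sum_comm]
    refine Finset.sum_congr rfl fun k _ => Finset.sum_congr rfl fun l _ => ?_
    rw [hA j i l k, hsym1 i j k l]
  simp only [add_div, Finset.sum_add_distrib, ← Finset.sum_div]
  rw [h2, h3, h4]; ring

lemma eps_sq (x n : Fin 3 → ℝ) :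
    ∑ i, ∑ j, ((x i * n j + x j * n i)/2)^2
      = ((∑ i, (x i)^2) * (∑ i, (n i)^2) + (∑ i, x i * n i)^2) / 2 := by
  have expand : ∀ i j : Fin 3, ((x i * n j + x j * n i)/2)^2
      = ((x i)^2 * (n j)^2)/4 + ((x j)^2 * (n i)^2)/4 + ((x i * n i) * (x j * n j))/2 := by
    intro i j; ring
  simp only [expand, Finset.sum_add_distrib, ← Finset.sum_div]
  rw [← Finset.sum_mul_sum, ← Finset.sum_mul_sum]
  have h2 : (∑ i : Fin 3, ∑ j : Fin 3, (x j)^2 * (n i)^2)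
      = (∑ j : Fin 3, (x j)^2) * (∑ i : Fin 3, (n i)^2) := by
    rw [Finset.sum_comm, ← Finset.sum_mul_sum]
  rw [h2]; ring

lemma acousticT_posDef (hsym1 : ∀ i j k l, C i j k l = C i j l k)
    (hsym2 : ∀ i j k l, C i j k l = C k l i j)
    (hconv : ∃ lam : ℝ, 0 < lam ∧ ∀ ε : Matrix (Fin 3) (Fin 3) ℝ, ε.IsSymm →
      lam * ∑ i, ∑ j, (ε i j) ^ 2 ≤ ∑ i, ∑ j, ∑ k, ∑ l, C i j k l * ε i j * ε k l)
    (n : EuclideanSpace ℝ (Fin 3)) (hn : 0 < ∑ j, (n j)^2) :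
    (acousticT C n).PosDef := by
  obtain ⟨lam, hlam, hc⟩ := hconv
  refine posDef_iff_dotProduct_mulVec.mpr ⟨acousticT_isHermitian hsym1 hsym2 n, fun x hx => ?_⟩
  have hsx : star x = x := by
    funext i; simp
  rw [hsx, quad_eq]
  set ε : Matrix (Fin 3) (Fin 3) ℝ := Matrix.of fun i j => (x i * n j + x j * n i)/2 with hε
  have hεs : ε.IsSymm := by
    ext i j
    simp only [hε, Matrix.transpose_apply, Matrix.of_apply]
    ring
  have h1 := hc ε hεs
  have hquad : (∑ i, ∑ j, ∑ k, ∑ l, C i j k l * ε i j * ε k l)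
      = ∑ i, ∑ j, ∑ k, ∑ l, C i j k l * x i * n j * x k * n l := by
    simpa [hε] using sym_quad hsym1 (symA hsym1 hsym2) x (fun j => n j)
  have hsq : (∑ i, ∑ j, (ε i j)^2)
      = ((∑ i, (x i)^2) * (∑ i, (n i)^2) + (∑ i, x i * n i)^2) / 2 := by
    simpa [hε] using eps_sq x (fun j => n j)
  have hX : 0 < ∑ i, (x i)^2 := by
    obtain ⟨i, hi⟩ := Function.ne_iff.mp hx
    have hi' : x i ≠ 0 := by simpa using hi
    have h0 : 0 < (x i)^2 := by positivity
    have hle : (x i)^2 ≤ ∑ j, (x j)^2 := Finset.single_le_sum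
      (f := fun i => (x i)^2) (fun j _ => sq_nonneg (x j)) (Finset.mem_univ i)
    linarith
  rw [hquad, hsq] at h1
  have hP := sq_nonneg (∑ i, x i * n i)
  nlinarith [mul_pos (mul_pos hlam hX) hn]

end ElasticAux

lemma elastic_ii_sum {f : Fin 3 → ℝ → ℝ} {μ : MeasureTheory.Measure ℝ} {a b : ℝ}
    (h : ∀ k, IntervalIntegrable (f k) μ a b) :
    IntervalIntegrable (fun x => ∑ k, f k x) μ a b := by
  have h2 := IntervalIntegrable.sum (μ := μ) (a := a) (b := b) Finset.univ
    (fun k _ => h k)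
  rw [show (fun x => ∑ k, f k x) = ∑ k, f k from by ext x; simp [Finset.sum_apply]]
  exact h2

lemma elastic_swap_integral (c : Fin 3 → Fin 3 → ℝ) (g : Fin 3 → Fin 3 → ℝ → ℝ) (b : ℝ)
    (hg : ∀ i k, IntervalIntegrable (g i k) MeasureTheory.volume 0 b) :
    (∫ φ in (0:ℝ)..b, ∑ i, ∑ k, c i k * g i k φ)
      = ∑ i, ∑ k, c i k * ∫ φ in (0:ℝ)..b, g i k φ := by
  have h2 := intervalIntegral.integral_finset_sum (μ := MeasureTheory.volume)
    (a := 0) (b := b) (s := Finset.univ)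
    (f := fun (i : Fin 3) φ => ∑ k, c i k * g i k φ) (fun i _ =>
      elastic_ii_sum (fun k => (hg i k).const_mul (c i k)))
  rw [h2]
  refine Finset.sum_congr rfl fun i _ => ?_
  have h3 := intervalIntegral.integral_finset_sum (μ := MeasureTheory.volume)
    (a := 0) (b := b) (s := Finset.univ)
    (f := fun (k : Fin 3) φ => c i k * g i k φ) (fun k _ => (hg i k).const_mul (c i k))
  rw [h3]
  exact Finset.sum_congr rfl fun k _ => intervalIntegral.integral_const_mul _ _

lemma nPhi_apply (l : EuclideanSpace ℝ (Fin 3)) (φ : ℝ) (j : Fin 3) :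
    nPhi l φ j = -Real.sin φ * ((Real.sqrt (1 - (l 0) ^ 2))⁻¹ *
        ![1 - (l 0) ^ 2, -(l 0) * (l 1), -(l 0) * (l 2)] j)
      + Real.cos φ * ((Real.sqrt (1 - (l 0) ^ 2))⁻¹ * ![0, l 2, -(l 1)] j) := by
  simp [nPhi, mZero, nZero, PiLp.add_apply, PiLp.smul_apply, smul_eq_mul]

lemma nPhi_sq (l : EuclideanSpace ℝ (Fin 3)) (hl : ‖l‖ = 1) (hl1 : (l 0) ^ 2 < 1)
    (φ : ℝ) : ∑ j, (nPhi l φ j)^2 = 1 := by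
  have hs : (0:ℝ) < 1 - (l 0)^2 := by linarith
  have hr2 : (Real.sqrt (1 - (l 0)^2))^2 = 1 - (l 0)^2 := Real.sq_sqrt hs.le
  have hrpos : 0 < Real.sqrt (1 - (l 0)^2) := Real.sqrt_pos.mpr hs
  have hnorm : (l 0)^2 + (l 1)^2 + (l 2)^2 = 1 := by
    have h := hl
    rw [EuclideanSpace.norm_eq] at h
    have h2 : ∑ i, (l i)^2 = 1 := by
      have := Real.sqrt_eq_one.mp (by simpa [sq_abs, sq] using h)
      simpa [sq] using this
    simpa [Fin.sum_univ_three] using h2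
  have hsc := Real.sin_sq_add_cos_sq φ
  simp only [Fin.sum_univ_three, nPhi_apply, Matrix.cons_val_zero, Matrix.cons_val_one,
    Matrix.head_cons, Matrix.cons_val_two, Matrix.tail_cons]
  field_simp
  linear_combination (Real.sin φ)^2 * (1 - (l 0)^2) * hr2
    + ((Real.sin φ)^2 * (l 0)^2 + (Real.cos φ)^2) * hnorm + (1 - (l 0)^2) * hsc
    + (Real.sin φ ^ 2 * l 0 ^ 2 - Real.sin φ ^ 2 - 1) * hr2


set_option maxHeartbeats 1000000 in
theorem STwo_posDef
    (C : Fin 3 → Fin 3 → Fin 3 → Fin 3 → ℝ)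
    (hsym1 : ∀ i j k l, C i j k l = C i j l k)
    (hsym2 : ∀ i j k l, C i j k l = C k l i j)
    (hconv : ∃ lam : ℝ, 0 < lam ∧ ∀ ε : Matrix (Fin 3) (Fin 3) ℝ, ε.IsSymm →
      lam * ∑ i, ∑ j, (ε i j) ^ 2 ≤ ∑ i, ∑ j, ∑ k, ∑ l, C i j k l * ε i j * ε k l)
    (l : EuclideanSpace ℝ (Fin 3)) (hl : ‖l‖ = 1) (hl1 : (l 0) ^ 2 < 1) :
    (STwo C l).IsSymm ∧ (STwo C l).PosDef ∧ IsUnit (STwo C l).det := by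
  set T : ℝ → Matrix (Fin 3) (Fin 3) ℝ := fun φ => acousticT C (nPhi l φ) with hT
  have hpd : ∀ φ, (T φ).PosDef := fun φ =>
    acousticT_posDef hsym1 hsym2 hconv _ (by rw [nPhi_sq l hl hl1 φ]; norm_num)
  have hipd : ∀ φ, (T φ)⁻¹.PosDef := fun φ => (hpd φ).inv
  -- continuity
  have hcn : ∀ j, Continuous fun φ => nPhi l φ j := by
    intro j
    simp only [nPhi_apply]
    fun_prop
  have hTc : Continuous T := by
    refine continuous_matrix fun i k => ?_
    simp only [hT, acousticT, Matrix.of_apply]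
    exact continuous_finset_sum _ fun j _ => continuous_finset_sum _ fun m _ =>
      ((continuous_const.mul (hcn j)).mul (hcn m))
  have hdetne : ∀ φ, (T φ).det ≠ 0 := fun φ => (hpd φ).det_pos.ne'
  have hie : ∀ φ, (T φ)⁻¹ = Matrix.of fun i k => (T φ).det⁻¹ * (T φ).adjugate i k := by
    intro φ
    rw [Matrix.inv_def, Ring.inverse_eq_inv]
    ext i k
    simp [Matrix.smul_apply, smul_eq_mul]
  have hic : ∀ i k, Continuous fun φ => (T φ)⁻¹ i k := by
    intro i k
    simp only [hie, Matrix.of_apply]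
    exact ((hTc.matrix_det).inv₀ hdetne).mul (hTc.matrix_adjugate.matrix_elem i k)
  have hii : ∀ i k, IntervalIntegrable (fun φ => (T φ)⁻¹ i k)
      MeasureTheory.volume 0 (2 * Real.pi) := fun i k => (hic i k).intervalIntegrable 0 _
  -- symmetry of integrand
  have hTsym : ∀ φ i k, (T φ)⁻¹ k i = (T φ)⁻¹ i k := by
    intro φ i k
    have h := (hipd φ).1
    conv_rhs => rw [← h]
    simp [conjTranspose_apply]
  have hSsym : (STwo C l).IsSymm := by
    ext i k
    simp only [Matrix.transpose_apply, STwo, Matrix.of_apply]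
    congr 1
    exact intervalIntegral.integral_congr fun φ _ => hTsym φ i k
  suffices hSpd : (STwo C l).PosDef by
    exact ⟨hSsym, hSpd, hSpd.det_pos.ne'.isUnit⟩
  · refine posDef_iff_dotProduct_mulVec.mpr ⟨?_, fun x hx => ?_⟩
    · ext i k
      simp only [conjTranspose_apply, star_trivial]
      simpa using (congrFun (congrFun hSsym k) i).symm
    · have hsx : star x = x := by funext i; simp
      rw [hsx]
      have hgpos : ∀ φ, 0 < x ⬝ᵥ ((T φ)⁻¹ *ᵥ x) := by
        intro φ
        have := (hipd φ).dotProduct_mulVec_pos hx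
        rwa [show star x = x from funext fun i => by simp] at this
      have hptwise : ∀ φ, x ⬝ᵥ ((T φ)⁻¹ *ᵥ x) = ∑ i, ∑ k, x i * x k * (T φ)⁻¹ i k := by
        intro φ
        simp only [dotProduct, Matrix.mulVec, dotProduct, Finset.mul_sum]
        exact Finset.sum_congr rfl fun i _ => Finset.sum_congr rfl fun k _ => by ring
      have hgc : Continuous fun φ => x ⬝ᵥ ((T φ)⁻¹ *ᵥ x) := by
        simp only [hptwise]
        exact continuous_finset_sum _ fun i _ => continuous_finset_sum _ fun k _ =>
          continuous_const.mul (hic i k)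
      have hipos : 0 < ∫ φ in (0:ℝ)..(2 * Real.pi), x ⬝ᵥ ((T φ)⁻¹ *ᵥ x) :=
        intervalIntegral.intervalIntegral_pos_of_pos (hgc.intervalIntegrable 0 _) hgpos
          (by positivity)
      have hkey : x ⬝ᵥ ((STwo C l) *ᵥ x)
          = (2 * Real.pi)⁻¹ * ∫ φ in (0:ℝ)..(2 * Real.pi), x ⬝ᵥ ((T φ)⁻¹ *ᵥ x) := by
        have hswap : (∫ φ in (0:ℝ)..(2 * Real.pi), x ⬝ᵥ ((T φ)⁻¹ *ᵥ x))
            = ∑ i, ∑ k, x i * x k * ∫ φ in (0:ℝ)..(2 * Real.pi), (T φ)⁻¹ i k := by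
          have h1 : (∫ φ in (0:ℝ)..(2 * Real.pi), x ⬝ᵥ ((T φ)⁻¹ *ᵥ x))
              = ∫ φ in (0:ℝ)..(2 * Real.pi), ∑ i, ∑ k, x i * x k * (T φ)⁻¹ i k :=
            intervalIntegral.integral_congr fun φ _ => hptwise φ
          rw [h1]
          exact elastic_swap_integral (fun i k => x i * x k)
            (fun i k φ => (T φ)⁻¹ i k) (2 * Real.pi) hii
        rw [hswap]
        simp only [dotProduct, Matrix.mulVec, dotProduct, STwo, Matrix.of_apply,
          Finset.mul_sum]
        refine Finset.sum_congr rfl fun i _ => Finset.sum_congr rfl fun k _ => by ring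
      rw [hkey]
      have : (0:ℝ) < 2 * Real.pi := by positivity
      positivity
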